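/- arXiv:0712.4296 — 2 statements merged into one kernel-verified Lean document; each statement's English description precedes it below -/
import Mathlib

section
/- The free Burnside group B(3,3) on three generators of exponent 3 is finite of order 3^7 = 2187. -/
structure G7 where
  a : ZMod 3
  b : ZMod 3
  c : ZMod 3
  d : ZMod 3
  e : ZMod 3
  f : ZMod 3
  k : ZMod 3
  deriving DecidableEq

namespace G7

@[ext] theorem ext' (g h : G7) (ha : g.a = h.a) (hb : g.b = h.b) (hc : g.c = h.c)
    (hd : g.d = h.d) (he : g.e = h.e) (hf : g.f = h.f) (hk : g.k = h.k) : g = h := by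
  cases g; cases h; simp_all

def equiv : G7 ≃ (ZMod 3 × ZMod 3 × ZMod 3 × ZMod 3 × ZMod 3 × ZMod 3 × ZMod 3) where
  toFun g := (g.a, g.b, g.c, g.d, g.e, g.f, g.k)
  invFun p := ⟨p.1, p.2.1, p.2.2.1, p.2.2.2.1, p.2.2.2.2.1, p.2.2.2.2.2.1, p.2.2.2.2.2.2⟩
  left_inv _ := rfl
  right_inv _ := rfl

instance : Fintype G7 := Fintype.ofEquiv _ equiv.symm

theorem card_g7 : Nat.card G7 = 3 ^ 7 := by
  rw [Nat.card_congr equiv]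
  simp [Nat.card_prod, Nat.card_zmod]

instance : Mul G7 where
  mul g h :=
    ⟨g.a + h.a, g.b + h.b, g.c + h.c,
     g.d + h.d + g.b * h.a,
     g.e + h.e + g.c * h.a,
     g.f + h.f + g.c * h.b,
     g.k + h.k + g.f * h.a + g.c * g.b * h.a + 2 * g.e * h.b + 2 * g.c * h.a * h.b
       + g.d * h.c + g.b * h.a * h.c⟩

instance : One G7 where
  one := ⟨0,0,0,0,0,0,0⟩

instance : Inv G7 where
  inv g := ⟨-g.a, -g.b, -g.c, -g.d + g.a*g.b, -g.e + g.a*g.c, -g.f + g.b*g.c,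
            -g.k + g.f*g.a - g.e*g.b + g.d*g.c + g.a*g.b*g.c⟩

@[simp] theorem mul_a (g h : G7) : (g*h).a = g.a + h.a := rfl
@[simp] theorem mul_b (g h : G7) : (g*h).b = g.b + h.b := rfl
@[simp] theorem mul_c (g h : G7) : (g*h).c = g.c + h.c := rfl
@[simp] theorem mul_d (g h : G7) : (g*h).d = g.d + h.d + g.b * h.a := rfl
@[simp] theorem mul_e (g h : G7) : (g*h).e = g.e + h.e + g.c * h.a := rfl
@[simp] theorem mul_f (g h : G7) : (g*h).f = g.f + h.f + g.c * h.b := rfl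
@[simp] theorem mul_k (g h : G7) : (g*h).k = g.k + h.k + g.f * h.a + g.c * g.b * h.a
    + 2 * g.e * h.b + 2 * g.c * h.a * h.b + g.d * h.c + g.b * h.a * h.c := rfl
@[simp] theorem one_a : (1:G7).a = 0 := rfl
@[simp] theorem one_b : (1:G7).b = 0 := rfl
@[simp] theorem one_c : (1:G7).c = 0 := rfl
@[simp] theorem one_d : (1:G7).d = 0 := rfl
@[simp] theorem one_e : (1:G7).e = 0 := rfl
@[simp] theorem one_f : (1:G7).f = 0 := rfl
@[simp] theorem one_k : (1:G7).k = 0 := rfl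
@[simp] theorem inv_a (g : G7) : (g⁻¹).a = -g.a := rfl
@[simp] theorem inv_b (g : G7) : (g⁻¹).b = -g.b := rfl
@[simp] theorem inv_c (g : G7) : (g⁻¹).c = -g.c := rfl
@[simp] theorem inv_d (g : G7) : (g⁻¹).d = -g.d + g.a*g.b := rfl
@[simp] theorem inv_e (g : G7) : (g⁻¹).e = -g.e + g.a*g.c := rfl
@[simp] theorem inv_f (g : G7) : (g⁻¹).f = -g.f + g.b*g.c := rfl
@[simp] theorem inv_k (g : G7) : (g⁻¹).k = -g.k + g.f*g.a - g.e*g.b + g.d*g.c + g.a*g.b*g.c := rfl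

instance : Group G7 where
  mul_assoc g h i := by ext <;> simp <;> ring
  one_mul g := by ext <;> simp
  mul_one g := by ext <;> simp
  inv_mul_cancel g := by
    have h3 : (3:ZMod 3) = 0 := rfl
    ext <;> simp <;> try ring
    · linear_combination (g.a*g.b*g.c - g.e*g.b) * h3

theorem cube (g : G7) : g ^ 3 = 1 := by
  have h3 : (3:ZMod 3) = 0 := rfl
  have : g ^ 3 = g * g * g := by rw [pow_succ, pow_succ, pow_one]
  rw [this]
  ext <;> simp <;> try linear_combination g.a * h3
  · linear_combination g.b * h3
  · linear_combination g.c * h3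
  · linear_combination (g.d + g.a*g.b) * h3
  · linear_combination (g.e + g.a*g.c) * h3
  · linear_combination (g.f + g.b*g.c) * h3
  · linear_combination (g.k + g.f*g.a + 2*g.e*g.b + g.d*g.c + 6*g.a*g.b*g.c) * h3

end G7


section Exp3
variable {G : Type*} [Group G]

/-- commutator convention -/
def br (a b : G) : G := a⁻¹ * b⁻¹ * a * b

theorem br_def (a b : G) : br a b = a⁻¹ * b⁻¹ * a * b := rfl

theorem commute_build {a b c d : G} (h1 : Commute a c) (h2 : Commute a d)
    (h3 : Commute b c) (h4 : Commute b d) : Commute (a*b) (c*d) :=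
  (h1.mul_right h2).mul_left (h3.mul_right h4)

theorem conj_eq {a x : G} (H : Commute a x) : x⁻¹ * a * x = a := by
  rw [mul_assoc, H.eq, ← mul_assoc, inv_mul_cancel, one_mul]

theorem conj_eq' {a x : G} (H : Commute a x) : x * a * x⁻¹ = a := by
  rw [mul_assoc, H.inv_right.eq, ← mul_assoc, mul_inv_cancel, one_mul]

theorem commute_of_conj {a x : G} (h : x⁻¹ * a * x = a) : Commute a x := by
  have h1 : a * x = x * (x⁻¹ * a * x) := by group
  rw [h] at h1; exact h1

theorem br_eq_one {a b : G} (H : Commute a b) : br a b = 1 := by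
  have : br a b = a⁻¹ * b⁻¹ * (a * b) := by rw [br_def]; group
  rw [this, H.eq]; group

variable (h3 : ∀ g : G, g * g * g = 1)
include h3

theorem inv_eq_sq (a : G) : a⁻¹ = a * a := by
  symm; apply eq_inv_of_mul_eq_one_left
  have := h3 a; exact this

theorem pal (a b : G) : b * a * b = a⁻¹ * b⁻¹ * a⁻¹ := by
  calc b * a * b = a⁻¹ * ((a*b) * (a*b) * (a*b)) * (b⁻¹ * a⁻¹) := by group
    _ = a⁻¹ * 1 * (b⁻¹ * a⁻¹) := by rw [h3]
    _ = a⁻¹ * b⁻¹ * a⁻¹ := by group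

theorem engel_e1 (a b : G) : (br a b) * b = a * b * a⁻¹ := by
  calc (br a b) * b = a⁻¹ * (b⁻¹ * a * b⁻¹) * (b * b * b) := by rw [br_def]; group
    _ = a⁻¹ * (a⁻¹ * (b⁻¹)⁻¹ * a⁻¹) * (b * b * b) := by rw [pal h3 a b⁻¹]
    _ = a⁻¹ * (a⁻¹ * (b⁻¹)⁻¹ * a⁻¹) * 1 := by rw [h3]
    _ = a * ((a * a * a))⁻¹ * b * a⁻¹ := by group
    _ = a * (1:G)⁻¹ * b * a⁻¹ := by rw [h3]
    _ = a * b * a⁻¹ := by group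

theorem engel_e2 (a b : G) : b * (br a b) = a * b * a⁻¹ := by
  calc b * (br a b) = (b * a⁻¹ * b) * (b * b * b)⁻¹ * (b * a * b) := by rw [br_def]; group
    _ = ((a⁻¹)⁻¹ * b⁻¹ * (a⁻¹)⁻¹) * (b * b * b)⁻¹ * (a⁻¹ * b⁻¹ * a⁻¹) := by
        rw [pal h3 a⁻¹ b, pal h3 a b]
    _ = ((a⁻¹)⁻¹ * b⁻¹ * (a⁻¹)⁻¹) * (1:G)⁻¹ * (a⁻¹ * b⁻¹ * a⁻¹) := by rw [h3]
    _ = a * (b * (b * b * b)⁻¹) * a⁻¹ := by group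
    _ = a * (b * (1:G)⁻¹) * a⁻¹ := by rw [h3]
    _ = a * b * a⁻¹ := by group

/-- 2-Engel: `[a,b]` commutes with `b`. -/
theorem engel (a b : G) : Commute (br a b) b :=
  (engel_e1 h3 a b).trans (engel_e2 h3 a b).symm

/-- `[a,b]` commutes with `a`. -/
theorem engel' (a b : G) : Commute (br a b) a := by
  have h := (engel h3 b a).inv_left
  have e : (br b a)⁻¹ = br a b := by rw [br_def, br_def]; group
  rwa [e] at h

/-- `x` commutes with its conjugates. -/
theorem comm_conj_self (x k : G) : Commute x (k⁻¹ * x * k) := by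
  have hu : Commute x (br x k) := (engel' h3 x k).symm
  have := (Commute.refl x).mul_right hu
  have e : x * br x k = k⁻¹ * x * k := by rw [br_def]; group
  rwa [e] at this

/-- normal closure of an element is abelian. -/
theorem comm_conj (x g h : G) : Commute (g⁻¹ * x * g) (h⁻¹ * x * h) := by
  have base := comm_conj_self h3 x (h * g⁻¹)
  have := base.map (MulAut.conj g⁻¹).toMonoidHom
  have e1 : (MulAut.conj g⁻¹).toMonoidHom x = g⁻¹ * x * g := by
    simp [MulAut.conj_apply]
  have e2 : (MulAut.conj g⁻¹).toMonoidHom ((h * g⁻¹)⁻¹ * x * (h * g⁻¹)) = h⁻¹ * x * h := by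
    simp [MulAut.conj_apply]; group
  rwa [e1, e2] at this

omit h3

/-- generic conjugation computation used for centrality of weight-3 commutators -/
theorem central_aux {u z x s : G} (Hux : Commute u x) (Hus : Commute u s)
    (Hcs : Commute (br u z) s) (hs : x⁻¹ * z * x = z * s) :
    Commute (br u z) x := by
  apply commute_of_conj
  calc x⁻¹ * (br u z) * x
      = (x⁻¹*u*x)⁻¹ * (x⁻¹*z*x)⁻¹ * (x⁻¹*u*x) * (x⁻¹*z*x) := by rw [br_def]; group
    _ = u⁻¹ * (z*s)⁻¹ * u * (z*s) := by rw [conj_eq Hux, hs]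
    _ = (u⁻¹ * s⁻¹) * (z⁻¹ * u * z) * s := by group
    _ = (s⁻¹ * u⁻¹) * (z⁻¹ * u * z) * s := by rw [(Hus.inv_left.inv_right).eq]
    _ = s⁻¹ * (br u z) * s := by rw [br_def]; group
    _ = br u z := conj_eq Hcs

include h3

/-- `[[x,y],z]` commutes with `z`. -/
theorem central_z (x y z : G) : Commute (br (br x y) z) z := engel h3 (br x y) z

/-- `[[x,y],z]` commutes with `x`. -/
theorem central_x (x y z : G) : Commute (br (br x y) z) x := by
  set u := br x y with hu
  apply central_aux (s := br z x)
  · -- Commute u x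
    exact engel' h3 x y
  · -- Commute u (br z x)
    have c1 : Commute (y⁻¹*x*y) (z⁻¹*x*z) := comm_conj h3 x y z
    have c2 : Commute x (z⁻¹*x*z) := comm_conj_self h3 x z
    have c3 : Commute (y⁻¹*x*y) x := (comm_conj_self h3 x y).symm
    have e1 : u = x⁻¹ * (y⁻¹*x*y) := by rw [hu, br_def]; group
    have e2 : br z x = (z⁻¹*x*z)⁻¹ * x := by rw [br_def]; group
    rw [e1, e2]
    exact commute_build (c2.inv_left.inv_right) ((Commute.refl x).inv_left)
      (c1.inv_right) c3
  · -- Commute (br u z) (br z x)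
    have c1 : Commute (u⁻¹*z*u) (x⁻¹*z*x) := comm_conj h3 z u x
    have c2 : Commute z (x⁻¹*z*x) := comm_conj_self h3 z x
    have c3 : Commute (u⁻¹*z*u) z := (comm_conj_self h3 z u).symm
    have e1 : br u z = (u⁻¹*z*u)⁻¹ * z := by rw [br_def]; group
    have e2 : br z x = z⁻¹ * (x⁻¹*z*x) := by rw [br_def]; group
    rw [e1, e2]
    exact commute_build (c3.inv_left.inv_right) (c1.inv_left)
      ((Commute.refl z).inv_right) c2
  · rw [br_def]; group

/-- `[[x,y],z]` commutes with `y`. -/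
theorem central_y (x y z : G) : Commute (br (br x y) z) y := by
  set u := br x y with hu
  apply central_aux (s := br z y)
  · exact engel h3 x y
  · have c1 : Commute (x⁻¹*y*x) (z⁻¹*y*z) := comm_conj h3 y x z
    have c2 : Commute y (z⁻¹*y*z) := comm_conj_self h3 y z
    have c3 : Commute (x⁻¹*y*x) y := (comm_conj_self h3 y x).symm
    have e1 : u = (x⁻¹*y*x)⁻¹ * y := by rw [hu, br_def]; group
    have e2 : br z y = (z⁻¹*y*z)⁻¹ * y := by rw [br_def]; group
    rw [e1, e2]
    exact commute_build (c1.inv_left.inv_right) (c3.inv_left) (c2.inv_right)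
      (Commute.refl y)
  · have c1 : Commute (u⁻¹*z*u) (y⁻¹*z*y) := comm_conj h3 z u y
    have c2 : Commute z (y⁻¹*z*y) := comm_conj_self h3 z y
    have c3 : Commute (u⁻¹*z*u) z := (comm_conj_self h3 z u).symm
    have e1 : br u z = (u⁻¹*z*u)⁻¹ * z := by rw [br_def]; group
    have e2 : br z y = z⁻¹ * (y⁻¹*z*y) := by rw [br_def]; group
    rw [e1, e2]
    exact commute_build (c3.inv_left.inv_right) (c1.inv_left)
      ((Commute.refl z).inv_right) c2
  · rw [br_def]; group

omit h3

theorem commute_word {a w b : G} (h1 : Commute a w) (h2 : Commute a b) :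
    Commute a (w⁻¹ * b⁻¹ * w * b) :=
  ((h1.inv_right.mul_right h2.inv_right).mul_right h1).mul_right h2

/-- abstract engine for the weight-3 antisymmetry -/
theorem S2aux {P Q R β b c : G}
    (hR : R = Q⁻¹*c⁻¹*Q*c) (hβ : β = P⁻¹*b⁻¹*P*b)
    (hPc : Commute P c) (hQb : Commute Q b)
    (hRb : Commute R b) (hRc : Commute R c)
    (hβc : Commute β c) (hβQ : Commute β Q)
    (hbig : (P*Q*R)⁻¹*(b*c)⁻¹*(P*Q*R)*(b*c) = 1) : β * R = 1 := by
  have key : (P*Q*R)⁻¹*(b*c)⁻¹*(P*Q*R)*(b*c) = β * R := by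
    calc (P*Q*R)⁻¹*(b*c)⁻¹*(P*Q*R)*(b*c)
        = R⁻¹*Q⁻¹*P⁻¹*c⁻¹*b⁻¹*P*Q*(R*b)*c := by group
      _ = R⁻¹*Q⁻¹*P⁻¹*c⁻¹*b⁻¹*P*Q*(b*R)*c := by rw [hRb.eq]
      _ = R⁻¹*Q⁻¹*P⁻¹*c⁻¹*b⁻¹*P*Q*b*(R*c) := by group
      _ = R⁻¹*Q⁻¹*P⁻¹*c⁻¹*b⁻¹*P*Q*b*(c*R) := by rw [hRc.eq]
      _ = R⁻¹*(Q⁻¹*P⁻¹*c⁻¹*(b⁻¹*P*b)*(b⁻¹*Q*b)*c)*R := by group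
      _ = R⁻¹*(Q⁻¹*P⁻¹*c⁻¹*(P*β)*Q*c)*R := by
          rw [conj_eq hQb, show b⁻¹*P*b = P*β from by rw [hβ]; group]
      _ = R⁻¹*(Q⁻¹*P⁻¹*(c⁻¹*P)*β*Q*c)*R := by group
      _ = R⁻¹*(Q⁻¹*P⁻¹*(P*c⁻¹)*β*Q*c)*R := by rw [(hPc.inv_right.symm).eq]
      _ = R⁻¹*(Q⁻¹*c⁻¹*(β*Q)*c)*R := by group
      _ = R⁻¹*(Q⁻¹*c⁻¹*(Q*β)*c)*R := by rw [hβQ.eq]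
      _ = R⁻¹*(Q⁻¹*c⁻¹*Q*c)*(c⁻¹*β*c)*R := by group
      _ = R⁻¹*R*(c⁻¹*β*c)*R := by rw [← hR]
      _ = R⁻¹*R*β*R := by rw [conj_eq hβc]
      _ = β * R := by group
  rw [key] at hbig; exact hbig

include h3

/-- weight-3 antisymmetry in the last two slots -/
theorem S2 (w b c : G) : br (br w b) c = (br (br w c) b)⁻¹ := by
  have hβw : Commute (br (br w c) b) w := central_x h3 w c b
  have hβb : Commute (br (br w c) b) b := central_z h3 w c b
  have hβc : Commute (br (br w c) b) c := central_y h3 w c b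
  have hβQ : Commute (br (br w c) b) (br w b) := by
    have := commute_word (a := br (br w c) b) hβw hβb
    rwa [show w⁻¹*b⁻¹*w*b = br w b from rfl] at this
  have hbig : (br w c * br w b * br (br w b) c)⁻¹ * (b*c)⁻¹
      * (br w c * br w b * br (br w b) c) * (b*c) = 1 := by
    have h1 : br (br w (b*c)) (b*c) = 1 := br_eq_one (engel h3 w (b*c))
    have h2 : br (br w (b*c)) (b*c)
        = (br w c * br w b * br (br w b) c)⁻¹ * (b*c)⁻¹
          * (br w c * br w b * br (br w b) c) * (b*c) := by
      simp only [br_def]; group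
    rw [← h2]; exact h1
  have := S2aux (P := br w c) (Q := br w b) (R := br (br w b) c)
    (β := br (br w c) b) rfl rfl (engel h3 w c) (engel h3 w b)
    (central_y h3 w b c) (central_z h3 w b c) hβc hβQ hbig
  exact eq_inv_of_mul_eq_one_right this

end Exp3

-- generic power-movement lemmas
section PowMove
variable {G : Type*} [Group G]

theorem pow_move {a b t : G} (hbase : b * a = a * b * t) (htb : Commute t b) :
    ∀ n : ℕ, b ^ n * a = a * b ^ n * t ^ n := by
  intro n
  induction n with
  | zero => simp
  | succ n ih =>
    calc b ^ (n+1) * a = b ^ n * (b * a) := by rw [pow_succ]; group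
      _ = b ^ n * (a * b * t) := by rw [hbase]
      _ = (b ^ n * a) * b * t := by group
      _ = (a * b ^ n * t ^ n) * b * t := by rw [ih]
      _ = a * b ^ n * (t ^ n * b) * t := by group
      _ = a * b ^ n * (b * t ^ n) * t := by rw [(htb.pow_left n).eq]
      _ = a * b ^ (n+1) * t ^ (n+1) := by rw [pow_succ, pow_succ]; group

theorem pow_move2 {a b t : G} (h : ∀ n : ℕ, b ^ n * a = a * b ^ n * t ^ n)
    (hta : Commute t a) : ∀ m n : ℕ, b ^ m * a ^ n = a ^ n * b ^ m * t ^ (m * n) := by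
  intro m n
  induction n with
  | zero => simp
  | succ n ih =>
    calc b ^ m * a ^ (n+1) = (b ^ m * a ^ n) * a := by rw [pow_succ]; group
      _ = a ^ n * b ^ m * t ^ (m*n) * a := by rw [ih]
      _ = a ^ n * b ^ m * (t ^ (m*n) * a) := by group
      _ = a ^ n * b ^ m * (a * t ^ (m*n)) := by rw [(hta.pow_left (m*n)).eq]
      _ = a ^ n * (b ^ m * a) * t ^ (m*n) := by group
      _ = a ^ n * (a * b ^ m * t ^ m) * t ^ (m*n) := by rw [h m]
      _ = a ^ (n+1) * b ^ m * t ^ (m + m*n) := by rw [pow_succ, pow_add]; group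
      _ = a ^ (n+1) * b ^ m * t ^ (m * (n+1)) := by ring_nf
end PowMove


/-- The free Burnside group `B(m, n)`: the quotient of the free group on `m`
generators by the normal closure of the set of `n`-th powers of all its
elements. -/
def BurnsideGroup (m n : ℕ) : Type :=
  PresentedGroup {w : FreeGroup (Fin m) | ∃ x : FreeGroup (Fin m), w = x ^ n}

instance (m n : ℕ) : Group (BurnsideGroup m n) :=
  inferInstanceAs (Group (PresentedGroup _))

namespace B33

abbrev B := BurnsideGroup 3 3

theorem hcube (g : B) : g * g * g = 1 := by
  obtain ⟨w, rfl⟩ := QuotientGroup.mk'_surjective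
    (Subgroup.normalClosure {w : FreeGroup (Fin 3) | ∃ x, w = x ^ 3}) g
  exact (QuotientGroup.eq_one_iff _).mpr
    (Subgroup.subset_normalClosure ⟨w, by rw [pow_succ, pow_succ, pow_one]⟩)

def X : B := PresentedGroup.of 0
def Y : B := PresentedGroup.of 1
def Z : B := PresentedGroup.of 2
def U : B := br Y X
def V : B := br Z X
def W : B := br Z Y
def Cc : B := br W X

theorem cUX : Commute U X := engel hcube Y X
theorem cUY : Commute U Y := engel' hcube Y X
theorem cVX : Commute V X := engel hcube Z X
theorem cVZ : Commute V Z := engel' hcube Z X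
theorem cWY : Commute W Y := engel hcube Z Y
theorem cWZ : Commute W Z := engel' hcube Z Y
theorem cCX : Commute Cc X := engel hcube W X
theorem cCW : Commute Cc W := engel' hcube W X
theorem cCY : Commute Cc Y := central_y hcube Z Y X
theorem cCZ : Commute Cc Z := central_x hcube Z Y X

theorem cCU : Commute Cc U := by
  have := commute_word (a := Cc) cCY cCX
  rwa [show Y⁻¹*X⁻¹*Y*X = U from rfl] at this

theorem cCV : Commute Cc V := by
  have := commute_word (a := Cc) cCZ cCX
  rwa [show Z⁻¹*X⁻¹*Z*X = V from rfl] at this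

theorem cUV : Commute U V := by
  have c1 : Commute (Y⁻¹*X*Y) (Z⁻¹*X*Z) := comm_conj hcube X Y Z
  have c2 : Commute X (Z⁻¹*X*Z) := comm_conj_self hcube X Z
  have c3 : Commute (Y⁻¹*X*Y) X := (comm_conj_self hcube X Y).symm
  have e1 : U = (Y⁻¹*X*Y)⁻¹ * X := by rw [show U = br Y X from rfl, br_def]; group
  have e2 : V = (Z⁻¹*X*Z)⁻¹ * X := by rw [show V = br Z X from rfl, br_def]; group
  rw [e1, e2]
  exact commute_build (c1.inv_left.inv_right) (c3.inv_left) (c2.inv_right)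
    (Commute.refl X)

theorem cUW : Commute U W := by
  have c1 : Commute (X⁻¹*Y*X) (Z⁻¹*Y*Z) := comm_conj hcube Y X Z
  have c2 : Commute Y (Z⁻¹*Y*Z) := comm_conj_self hcube Y Z
  have c3 : Commute (X⁻¹*Y*X) Y := (comm_conj_self hcube Y X).symm
  have e1 : U = Y⁻¹ * ((X⁻¹*Y*X) * (Y⁻¹ * Y)) := by
    rw [show U = br Y X from rfl, br_def]; group
  have e2 : W = (Z⁻¹*Y*Z)⁻¹ * Y := by rw [show W = br Z Y from rfl, br_def]; group
  have e1' : U = Y⁻¹ * (X⁻¹*Y*X) := by rw [e1]; group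
  rw [e1', e2]
  exact commute_build (c2.inv_left.inv_right) ((Commute.refl Y).inv_left)
    (c1.inv_right) c3

theorem cVW : Commute V W := by
  have c1 : Commute (X⁻¹*Z*X) (Y⁻¹*Z*Y) := comm_conj hcube Z X Y
  have c2 : Commute Z (Y⁻¹*Z*Y) := comm_conj_self hcube Z Y
  have c3 : Commute Z (X⁻¹*Z*X) := comm_conj_self hcube Z X
  have e1 : V = Z⁻¹ * (X⁻¹*Z*X) := by rw [show V = br Z X from rfl, br_def]; group
  have e2 : W = Z⁻¹ * (Y⁻¹*Z*Y) := by rw [show W = br Z Y from rfl, br_def]; group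
  rw [e1, e2]
  exact commute_build ((Commute.refl Z).inv_left.inv_right) (c2.inv_left)
    (c3.symm.inv_right) c1

theorem rUZ : br U Z = Cc := by
  have s2 : br (br Y X) Z = (br (br Y Z) X)⁻¹ := S2 hcube Y X Z
  have e1 : br Y Z = (br Z Y)⁻¹ := by rw [br_def, br_def]; group
  have e2 : br ((br Z Y))⁻¹ X = (br Z Y) * (br (br Z Y) X)⁻¹ * (br Z Y)⁻¹ := by
    simp only [br_def]; group
  have e3 : (br Z Y) * (br (br Z Y) X)⁻¹ * (br Z Y)⁻¹ = Cc⁻¹ := by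
    have : Commute Cc⁻¹ W := cCW.inv_left
    exact conj_eq' this
  rw [show U = br Y X from rfl, s2, e1, e2, e3, inv_inv]

theorem rVY : br V Y = Cc⁻¹ := by
  have s2 : br (br Z X) Y = (br (br Z Y) X)⁻¹ := S2 hcube Z X Y
  rw [show V = br Z X from rfl, s2]; rfl

theorem mYX : Y * X = X * Y * U := by
  rw [show U = br Y X from rfl, br_def]; group
theorem mZX : Z * X = X * Z * V := by
  rw [show V = br Z X from rfl, br_def]; group
theorem mZY : Z * Y = Y * Z * W := by
  rw [show W = br Z Y from rfl, br_def]; group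
theorem mWX : W * X = X * W * Cc := by
  rw [show Cc = br W X from rfl, br_def]; group
theorem mUZ : U * Z = Z * U * Cc := by
  calc U * Z = Z * U * (br U Z) := by rw [br_def]; group
    _ = Z * U * Cc := by rw [rUZ]
theorem mVY : V * Y = Y * V * (Cc * Cc) := by
  calc V * Y = Y * V * (br V Y) := by rw [br_def]; group
    _ = Y * V * Cc⁻¹ := by rw [rVY]
    _ = Y * V * (Cc * Cc) := by rw [← inv_eq_sq hcube Cc]

theorem pYX (n : ℕ) : Y ^ n * X = X * Y ^ n * U ^ n := pow_move mYX cUY n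
theorem pZX (n : ℕ) : Z ^ n * X = X * Z ^ n * V ^ n := pow_move mZX cVZ n
theorem pZY (n : ℕ) : Z ^ n * Y = Y * Z ^ n * W ^ n := pow_move mZY cWZ n
theorem pWX (n : ℕ) : W ^ n * X = X * W ^ n * Cc ^ n := pow_move mWX cCW n
theorem pUZ (n : ℕ) : U ^ n * Z = Z * U ^ n * Cc ^ n := pow_move mUZ cCU n
theorem pVY (n : ℕ) : V ^ n * Y = Y * V ^ n * Cc ^ (2*n) := by
  have h := pow_move mVY (cCV.mul_left cCV) n
  rwa [show (Cc*Cc)^n = Cc^(2*n) from by rw [← sq, ← pow_mul]] at h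
theorem pUZn (m n : ℕ) : U ^ m * Z ^ n = Z ^ n * U ^ m * Cc ^ (m*n) :=
  pow_move2 pUZ cCZ m n

set_option maxHeartbeats 1000000 in
theorem nfX (A B' C D E F K : ℕ) :
    X^A*Y^B'*Z^C*U^D*V^E*W^F*Cc^K*X
      = X^(A+1)*Y^B'*Z^C*U^(B'+D)*V^(C+E)*W^F*Cc^(B'*C+(F+K)) := by
  calc X^A*Y^B'*Z^C*U^D*V^E*W^F*Cc^K*X
      = X^A*Y^B'*Z^C*U^D*V^E*W^F*(Cc^K*X) := by group
    _ = X^A*Y^B'*Z^C*U^D*V^E*W^F*(X*Cc^K) := by rw [(cCX.pow_left K).eq]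
    _ = X^A*Y^B'*Z^C*U^D*V^E*(W^F*X)*Cc^K := by group
    _ = X^A*Y^B'*Z^C*U^D*V^E*(X*W^F*Cc^F)*Cc^K := by rw [pWX F]
    _ = X^A*Y^B'*Z^C*U^D*(V^E*X)*W^F*Cc^F*Cc^K := by group
    _ = X^A*Y^B'*Z^C*U^D*(X*V^E)*W^F*Cc^F*Cc^K := by rw [(cVX.pow_left E).eq]
    _ = X^A*Y^B'*Z^C*(U^D*X)*V^E*W^F*Cc^F*Cc^K := by group
    _ = X^A*Y^B'*Z^C*(X*U^D)*V^E*W^F*Cc^F*Cc^K := by rw [(cUX.pow_left D).eq]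
    _ = X^A*Y^B'*(Z^C*X)*U^D*V^E*W^F*Cc^F*Cc^K := by group
    _ = X^A*Y^B'*(X*Z^C*V^C)*U^D*V^E*W^F*Cc^F*Cc^K := by rw [pZX C]
    _ = X^A*(Y^B'*X)*Z^C*V^C*U^D*V^E*W^F*Cc^F*Cc^K := by group
    _ = X^A*(X*Y^B'*U^B')*Z^C*V^C*U^D*V^E*W^F*Cc^F*Cc^K := by rw [pYX B']
    _ = X^A*X*Y^B'*(U^B'*Z^C)*V^C*U^D*V^E*W^F*Cc^F*Cc^K := by group
    _ = X^A*X*Y^B'*(Z^C*U^B'*Cc^(B'*C))*V^C*U^D*V^E*W^F*Cc^F*Cc^K := by rw [pUZn B' C]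
    _ = X^A*X*Y^B'*Z^C*U^B'*(Cc^(B'*C)*V^C)*U^D*V^E*W^F*Cc^F*Cc^K := by group
    _ = X^A*X*Y^B'*Z^C*U^B'*(V^C*Cc^(B'*C))*U^D*V^E*W^F*Cc^F*Cc^K := by
        rw [(cCV.pow_pow (B'*C) C).eq]
    _ = X^A*X*Y^B'*Z^C*U^B'*V^C*(Cc^(B'*C)*U^D)*V^E*W^F*Cc^F*Cc^K := by group
    _ = X^A*X*Y^B'*Z^C*U^B'*V^C*(U^D*Cc^(B'*C))*V^E*W^F*Cc^F*Cc^K := by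
        rw [(cCU.pow_pow (B'*C) D).eq]
    _ = X^A*X*Y^B'*Z^C*U^B'*V^C*U^D*(Cc^(B'*C)*V^E)*W^F*Cc^F*Cc^K := by group
    _ = X^A*X*Y^B'*Z^C*U^B'*V^C*U^D*(V^E*Cc^(B'*C))*W^F*Cc^F*Cc^K := by
        rw [(cCV.pow_pow (B'*C) E).eq]
    _ = X^A*X*Y^B'*Z^C*U^B'*V^C*U^D*V^E*(Cc^(B'*C)*W^F)*Cc^F*Cc^K := by group
    _ = X^A*X*Y^B'*Z^C*U^B'*V^C*U^D*V^E*(W^F*Cc^(B'*C))*Cc^F*Cc^K := by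
        rw [(cCW.pow_pow (B'*C) F).eq]
    _ = X^A*X*Y^B'*Z^C*U^B'*(V^C*U^D)*V^E*W^F*Cc^(B'*C)*Cc^F*Cc^K := by group
    _ = X^A*X*Y^B'*Z^C*U^B'*(U^D*V^C)*V^E*W^F*Cc^(B'*C)*Cc^F*Cc^K := by
        rw [(cUV.symm.pow_pow C D).eq]
    _ = X^(A+1)*Y^B'*Z^C*U^(B'+D)*V^(C+E)*W^F*Cc^(B'*C+(F+K)) := by
        rw [pow_succ X A, pow_add U B' D, pow_add V C E, pow_add Cc (B'*C) (F+K),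
          pow_add Cc F K]
        group

set_option maxHeartbeats 1000000 in
theorem nfY (A B' C D E F K : ℕ) :
    X^A*Y^B'*Z^C*U^D*V^E*W^F*Cc^K*Y
      = X^A*Y^(B'+1)*Z^C*U^D*V^E*W^(C+F)*Cc^(2*E+K) := by
  calc X^A*Y^B'*Z^C*U^D*V^E*W^F*Cc^K*Y
      = X^A*Y^B'*Z^C*U^D*V^E*W^F*(Cc^K*Y) := by group
    _ = X^A*Y^B'*Z^C*U^D*V^E*W^F*(Y*Cc^K) := by rw [(cCY.pow_left K).eq]
    _ = X^A*Y^B'*Z^C*U^D*V^E*(W^F*Y)*Cc^K := by group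
    _ = X^A*Y^B'*Z^C*U^D*V^E*(Y*W^F)*Cc^K := by rw [(cWY.pow_left F).eq]
    _ = X^A*Y^B'*Z^C*U^D*(V^E*Y)*W^F*Cc^K := by group
    _ = X^A*Y^B'*Z^C*U^D*(Y*V^E*Cc^(2*E))*W^F*Cc^K := by rw [pVY E]
    _ = X^A*Y^B'*Z^C*(U^D*Y)*V^E*Cc^(2*E)*W^F*Cc^K := by group
    _ = X^A*Y^B'*Z^C*(Y*U^D)*V^E*Cc^(2*E)*W^F*Cc^K := by rw [(cUY.pow_left D).eq]
    _ = X^A*Y^B'*(Z^C*Y)*U^D*V^E*Cc^(2*E)*W^F*Cc^K := by group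
    _ = X^A*Y^B'*(Y*Z^C*W^C)*U^D*V^E*Cc^(2*E)*W^F*Cc^K := by rw [pZY C]
    _ = X^A*Y^B'*Y*Z^C*(W^C*U^D)*V^E*Cc^(2*E)*W^F*Cc^K := by group
    _ = X^A*Y^B'*Y*Z^C*(U^D*W^C)*V^E*Cc^(2*E)*W^F*Cc^K := by
        rw [(cUW.symm.pow_pow C D).eq]
    _ = X^A*Y^B'*Y*Z^C*U^D*(W^C*V^E)*Cc^(2*E)*W^F*Cc^K := by group
    _ = X^A*Y^B'*Y*Z^C*U^D*(V^E*W^C)*Cc^(2*E)*W^F*Cc^K := by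
        rw [(cVW.symm.pow_pow C E).eq]
    _ = X^A*Y^B'*Y*Z^C*U^D*V^E*(W^C*Cc^(2*E))*W^F*Cc^K := by group
    _ = X^A*Y^B'*Y*Z^C*U^D*V^E*(Cc^(2*E)*W^C)*W^F*Cc^K := by
        rw [(cCW.symm.pow_pow C (2*E)).eq]
    _ = X^A*Y^B'*Y*Z^C*U^D*V^E*Cc^(2*E)*(W^C*W^F)*Cc^K := by group
    _ = X^A*Y^B'*Y*Z^C*U^D*V^E*(Cc^(2*E)*W^(C+F))*Cc^K := by rw [pow_add]; group
    _ = X^A*Y^B'*Y*Z^C*U^D*V^E*(W^(C+F)*Cc^(2*E))*Cc^K := by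
        rw [(cCW.symm.pow_pow (C+F) (2*E)).eq]
    _ = X^A*Y^(B'+1)*Z^C*U^D*V^E*W^(C+F)*Cc^(2*E+K) := by
        rw [pow_succ Y B', pow_add Cc (2*E) K]; group

set_option maxHeartbeats 1000000 in
theorem nfZ (A B' C D E F K : ℕ) :
    X^A*Y^B'*Z^C*U^D*V^E*W^F*Cc^K*Z
      = X^A*Y^B'*Z^(C+1)*U^D*V^E*W^F*Cc^(D+K) := by
  calc X^A*Y^B'*Z^C*U^D*V^E*W^F*Cc^K*Z
      = X^A*Y^B'*Z^C*U^D*V^E*W^F*(Cc^K*Z) := by group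
    _ = X^A*Y^B'*Z^C*U^D*V^E*W^F*(Z*Cc^K) := by rw [(cCZ.pow_left K).eq]
    _ = X^A*Y^B'*Z^C*U^D*V^E*(W^F*Z)*Cc^K := by group
    _ = X^A*Y^B'*Z^C*U^D*V^E*(Z*W^F)*Cc^K := by rw [(cWZ.pow_left F).eq]
    _ = X^A*Y^B'*Z^C*U^D*(V^E*Z)*W^F*Cc^K := by group
    _ = X^A*Y^B'*Z^C*U^D*(Z*V^E)*W^F*Cc^K := by rw [(cVZ.pow_left E).eq]
    _ = X^A*Y^B'*Z^C*(U^D*Z)*V^E*W^F*Cc^K := by group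
    _ = X^A*Y^B'*Z^C*(Z*U^D*Cc^D)*V^E*W^F*Cc^K := by rw [pUZ D]
    _ = X^A*Y^B'*Z^C*Z*U^D*(Cc^D*V^E)*W^F*Cc^K := by group
    _ = X^A*Y^B'*Z^C*Z*U^D*(V^E*Cc^D)*W^F*Cc^K := by rw [(cCV.pow_pow D E).eq]
    _ = X^A*Y^B'*Z^C*Z*U^D*V^E*(Cc^D*W^F)*Cc^K := by group
    _ = X^A*Y^B'*Z^C*Z*U^D*V^E*(W^F*Cc^D)*Cc^K := by rw [(cCW.pow_pow D F).eq]
    _ = X^A*Y^B'*Z^(C+1)*U^D*V^E*W^F*Cc^(D+K) := by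
        rw [pow_succ Z C, pow_add Cc D K]; group

def x7 : G7 := ⟨1,0,0,0,0,0,0⟩
def y7 : G7 := ⟨0,1,0,0,0,0,0⟩
def z7 : G7 := ⟨0,0,1,0,0,0,0⟩
def u7 : G7 := ⟨0,0,0,1,0,0,0⟩
def v7 : G7 := ⟨0,0,0,0,1,0,0⟩
def w7 : G7 := ⟨0,0,0,0,0,1,0⟩
def c7 : G7 := ⟨0,0,0,0,0,0,1⟩

noncomputable def nf (g : G7) : B :=
  X^g.a.val * Y^g.b.val * Z^g.c.val * U^g.d.val * V^g.e.val * W^g.f.val * Cc^g.k.val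

theorem pow3 (t : B) (n : ℕ) : t ^ n = t ^ (n % 3) := by
  conv_lhs => rw [← Nat.div_add_mod n 3]
  rw [pow_add, pow_mul,
    show t ^ 3 = 1 from by rw [pow_succ, pow_succ, pow_one]; exact hcube t,
    one_pow, one_mul]

theorem pow_cast (t : B) (s : ZMod 3) (n : ℕ) (h : (n : ZMod 3) = s) :
    t ^ n = t ^ s.val := by
  rw [pow3 t n, pow3 t s.val, Nat.mod_eq_of_lt (ZMod.val_lt s)]
  congr 1
  rw [← ZMod.val_natCast, h]

theorem hv (s : ZMod 3) : ((s.val : ZMod 3)) = s := by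
  simp [ZMod.natCast_val, ZMod.cast_id]

theorem nf_mulX (g : G7) : nf g * X = nf (g * x7) := by
  show (X^g.a.val*Y^g.b.val*Z^g.c.val*U^g.d.val*V^g.e.val*W^g.f.val*Cc^g.k.val)*X = _
  rw [nfX]
  have e : g * x7 = ⟨g.a+1, g.b, g.c, g.d+g.b, g.e+g.c, g.f, g.k+g.f+g.c*g.b⟩ := by
    ext <;> simp [x7] <;> ring
  rw [e]
  show _ = X^(g.a+1).val * Y^(g.b).val * Z^(g.c).val * U^(g.d+g.b).val
    * V^(g.e+g.c).val * W^(g.f).val * Cc^(g.k+g.f+g.c*g.b).val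
  rw [pow_cast X (g.a+1) (g.a.val+1) (by push_cast; simp [hv]),
    pow_cast U (g.d+g.b) (g.b.val+g.d.val) (by push_cast; simp only [hv]; ring),
    pow_cast V (g.e+g.c) (g.c.val+g.e.val) (by push_cast; simp only [hv]; ring),
    pow_cast Cc (g.k+g.f+g.c*g.b) (g.b.val*g.c.val+(g.f.val+g.k.val))
      (by push_cast; simp only [hv]; ring)]

theorem nf_mulY (g : G7) : nf g * Y = nf (g * y7) := by
  show (X^g.a.val*Y^g.b.val*Z^g.c.val*U^g.d.val*V^g.e.val*W^g.f.val*Cc^g.k.val)*Y = _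
  rw [nfY]
  have e : g * y7 = ⟨g.a, g.b+1, g.c, g.d, g.e, g.f+g.c, g.k+2*g.e⟩ := by
    ext <;> simp [y7] <;> ring
  rw [e]
  show _ = X^(g.a).val * Y^(g.b+1).val * Z^(g.c).val * U^(g.d).val
    * V^(g.e).val * W^(g.f+g.c).val * Cc^(g.k+2*g.e).val
  rw [pow_cast Y (g.b+1) (g.b.val+1) (by push_cast; simp [hv]),
    pow_cast W (g.f+g.c) (g.c.val+g.f.val) (by push_cast; simp only [hv]; ring),
    pow_cast Cc (g.k+2*g.e) (2*g.e.val+g.k.val) (by push_cast; simp only [hv]; ring)]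

theorem nf_mulZ (g : G7) : nf g * Z = nf (g * z7) := by
  show (X^g.a.val*Y^g.b.val*Z^g.c.val*U^g.d.val*V^g.e.val*W^g.f.val*Cc^g.k.val)*Z = _
  rw [nfZ]
  have e : g * z7 = ⟨g.a, g.b, g.c+1, g.d, g.e, g.f, g.k+g.d⟩ := by
    ext <;> simp [z7] <;> ring
  rw [e]
  show _ = X^(g.a).val * Y^(g.b).val * Z^(g.c+1).val * U^(g.d).val
    * V^(g.e).val * W^(g.f).val * Cc^(g.k+g.d).val
  rw [pow_cast Z (g.c+1) (g.c.val+1) (by push_cast; simp [hv]),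
    pow_cast Cc (g.k+g.d) (g.d.val+g.k.val) (by push_cast; simp only [hv]; ring)]

theorem nf_one : nf 1 = 1 := by
  show X^(0:ZMod 3).val * Y^(0:ZMod 3).val * Z^(0:ZMod 3).val * U^(0:ZMod 3).val
    * V^(0:ZMod 3).val * W^(0:ZMod 3).val * Cc^(0:ZMod 3).val = 1
  simp [ZMod.val_zero]

theorem nf_surj : Function.Surjective nf := by
  have key : ∀ b : B, ∃ τ : Equiv.Perm G7, ∀ g : G7, nf g * b = nf (τ g) := by
    intro b
    have hb : b ∈ Subgroup.closure (Set.range PresentedGroup.of) := by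
      rw [PresentedGroup.closure_range_of]; trivial
    induction hb using Subgroup.closure_induction with
    | mem x hx =>
      obtain ⟨i, rfl⟩ := hx
      fin_cases i
      · exact ⟨Equiv.mulRight x7, fun g => nf_mulX g⟩
      · exact ⟨Equiv.mulRight y7, fun g => nf_mulY g⟩
      · exact ⟨Equiv.mulRight z7, fun g => nf_mulZ g⟩
    | one => exact ⟨Equiv.refl _, fun g => mul_one (nf g)⟩
    | mul b1 b2 _ _ ih1 ih2 =>
      obtain ⟨τ1, h1⟩ := ih1
      obtain ⟨τ2, h2⟩ := ih2
      exact ⟨τ1.trans τ2, fun g => by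
        show nf g * (b1 * b2) = nf (τ2 (τ1 g)); rw [← mul_assoc, h1, h2]⟩
    | inv b _ ih =>
      obtain ⟨τ, h⟩ := ih
      refine ⟨τ.symm, fun g => ?_⟩
      have h2 : nf (τ.symm g) * b = nf g := by rw [h, Equiv.apply_symm_apply]
      exact (eq_mul_inv_of_mul_eq h2).symm
  intro b
  obtain ⟨τ, hτ⟩ := key b
  exact ⟨τ 1, by rw [← hτ 1, nf_one, one_mul]⟩

def f7 : Fin 3 → G7 := ![x7, y7, z7]

theorem hrel : ∀ r ∈ {w : FreeGroup (Fin 3) | ∃ x : FreeGroup (Fin 3), w = x ^ 3},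
    FreeGroup.lift f7 r = 1 := by
  rintro r ⟨x, rfl⟩
  rw [map_pow]
  exact G7.cube _

noncomputable def φ : B →* G7 := PresentedGroup.toGroup hrel

theorem φX : φ X = x7 := PresentedGroup.toGroup.of hrel
theorem φY : φ Y = y7 := PresentedGroup.toGroup.of hrel
theorem φZ : φ Z = z7 := PresentedGroup.toGroup.of hrel
theorem φU : φ U = u7 := by
  show φ (br Y X) = u7
  rw [br_def]
  simp only [map_mul, map_inv, φX, φY]
  decide
theorem φV : φ V = v7 := by
  show φ (br Z X) = v7
  rw [br_def]
  simp only [map_mul, map_inv, φX, φZ]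
  decide
theorem φW : φ W = w7 := by
  show φ (br Z Y) = w7
  rw [br_def]
  simp only [map_mul, map_inv, φY, φZ]
  decide
theorem φC : φ Cc = c7 := by
  show φ (br W X) = c7
  rw [br_def]
  simp only [map_mul, map_inv, φX, φW]
  decide

theorem x7pow (n : ℕ) : x7^n = ⟨(n : ZMod 3),0,0,0,0,0,0⟩ := by
  induction n with
  | zero => ext <;> simp
  | succ n ih => rw [pow_succ, ih]; ext <;> simp [x7] <;> push_cast <;> ring
theorem y7pow (n : ℕ) : y7^n = ⟨0,(n : ZMod 3),0,0,0,0,0⟩ := by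
  induction n with
  | zero => ext <;> simp
  | succ n ih => rw [pow_succ, ih]; ext <;> simp [y7] <;> push_cast <;> ring
theorem z7pow (n : ℕ) : z7^n = ⟨0,0,(n : ZMod 3),0,0,0,0⟩ := by
  induction n with
  | zero => ext <;> simp
  | succ n ih => rw [pow_succ, ih]; ext <;> simp [z7] <;> push_cast <;> ring
theorem u7pow (n : ℕ) : u7^n = ⟨0,0,0,(n : ZMod 3),0,0,0⟩ := by
  induction n with
  | zero => ext <;> simp
  | succ n ih => rw [pow_succ, ih]; ext <;> simp [u7] <;> push_cast <;> ring
theorem v7pow (n : ℕ) : v7^n = ⟨0,0,0,0,(n : ZMod 3),0,0⟩ := by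
  induction n with
  | zero => ext <;> simp
  | succ n ih => rw [pow_succ, ih]; ext <;> simp [v7] <;> push_cast <;> ring
theorem w7pow (n : ℕ) : w7^n = ⟨0,0,0,0,0,(n : ZMod 3),0⟩ := by
  induction n with
  | zero => ext <;> simp
  | succ n ih => rw [pow_succ, ih]; ext <;> simp [w7] <;> push_cast <;> ring
theorem c7pow (n : ℕ) : c7^n = ⟨0,0,0,0,0,0,(n : ZMod 3)⟩ := by
  induction n with
  | zero => ext <;> simp
  | succ n ih => rw [pow_succ, ih]; ext <;> simp [c7] <;> push_cast <;> ring

theorem g7_decomp (g : G7) :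
    g = x7^g.a.val * y7^g.b.val * z7^g.c.val * u7^g.d.val * v7^g.e.val
      * w7^g.f.val * c7^g.k.val := by
  rw [x7pow, y7pow, z7pow, u7pow, v7pow, w7pow, c7pow]
  ext <;> simp [hv]

theorem φ_nf (g : G7) : φ (nf g) = g := by
  show φ (X^g.a.val * Y^g.b.val * Z^g.c.val * U^g.d.val * V^g.e.val * W^g.f.val
    * Cc^g.k.val) = g
  simp only [map_mul, map_pow, φX, φY, φZ, φU, φV, φW, φC]
  exact (g7_decomp g).symm

end B33

theorem burnsideGroup_three_three_finite_card :
    Finite (BurnsideGroup 3 3) ∧ Nat.card (BurnsideGroup 3 3) = 3 ^ 7 := by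
  have hfin : Finite (BurnsideGroup 3 3) := Finite.of_surjective _ B33.nf_surj
  refine ⟨hfin, ?_⟩
  have h1 : Nat.card (BurnsideGroup 3 3) ≤ Nat.card G7 :=
    Nat.card_le_card_of_surjective _ B33.nf_surj
  have h2 : Nat.card G7 ≤ Nat.card (BurnsideGroup 3 3) :=
    Nat.card_le_card_of_surjective B33.φ (fun g => ⟨B33.nf g, B33.φ_nf g⟩)
  have := G7.card_g7
  omega
end

section
/- Let n be a positive integer and let G be a subgroup of the group GL(n, ℂ) of invertible n×n complex matrices. If there exists a positive integer m such that g^m = 1 for every element g of G, then G is finite. -/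
open Polynomial

lemma my_eval_charpoly {n : ℕ} (A : Matrix (Fin n) (Fin n) ℂ) (r : ℂ) :
    A.charpoly.eval r = (Matrix.scalar (Fin n) r - A).det := by
  rw [Matrix.charpoly, eval_det, Matrix.matPolyEquiv_charmatrix]
  simp

lemma my_root_pow {n m : ℕ} (A : Matrix (Fin n) (Fin n) ℂ) (hA : A ^ m = 1)
    {μ : ℂ} (hμ : μ ∈ A.charpoly.roots) : μ ^ m = 1 := by
  have hroot : A.charpoly.IsRoot μ := isRoot_of_mem_roots hμ
  have hdet : (Matrix.scalar (Fin n) μ - A).det = 0 := by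
    rw [← my_eval_charpoly]; exact hroot
  obtain ⟨v, hv, hvz⟩ := (Matrix.exists_mulVec_eq_zero_iff).mpr hdet
  have hAv : A.mulVec v = μ • v := by
    rw [Matrix.sub_mulVec] at hvz
    have h2 : (Matrix.scalar (Fin n) μ).mulVec v = μ • v := by
      have : Matrix.scalar (Fin n) μ = μ • (1 : Matrix (Fin n) (Fin n) ℂ) := by
        ext i j
        simp [Matrix.scalar_apply, Matrix.one_apply, Matrix.diagonal_apply]
      rw [this, Matrix.smul_mulVec, Matrix.one_mulVec]
    have := sub_eq_zero.mp hvz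
    rw [h2] at this
    exact this.symm
  have key : ∀ k : ℕ, (A ^ k).mulVec v = μ ^ k • v := by
    intro k
    induction k with
    | zero => simp [Matrix.one_mulVec]
    | succ k ih =>
      rw [pow_succ, ← Matrix.mulVec_mulVec, hAv, Matrix.mulVec_smul, ih, pow_succ,
        smul_smul, mul_comm]
  have h1 : v = μ ^ m • v := by
    have := key m
    rwa [hA, Matrix.one_mulVec] at this
  obtain ⟨i, hi⟩ := Function.ne_iff.mp hv
  have : v i = μ ^ m * v i := congrFun h1 i
  have hvi : v i ≠ 0 := by simpa using hi
  have h3 : (μ ^ m - 1) * v i = 0 := by linear_combination -this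
  rcases mul_eq_zero.mp h3 with h | h
  · exact sub_eq_zero.mp h
  · exact absurd h hvi

lemma my_abs_one {m : ℕ} (hm : 0 < m) {μ : ℂ} (hμ : μ ^ m = 1) : ‖μ‖ = 1 := by
  have h1 : ‖μ‖ ^ m = 1 := by
    rw [← norm_pow, hμ, norm_one]
  have h0 : 0 ≤ ‖μ‖ := norm_nonneg _
  rcases (pow_eq_one_iff_cases).mp h1 with h | h | h
  · omega
  · exact h
  · exfalso; obtain ⟨h2, -⟩ := h; linarith

lemma my_key {n m : ℕ} (hn : 0 < n) (hm : 0 < m) (A : Matrix (Fin n) (Fin n) ℂ)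
    (hA : A ^ m = 1) (htr : A.trace = n) : A = 1 := by
  have hsp : A.charpoly.Splits := IsAlgClosed.splits _
  have hcard : A.charpoly.roots.card = n := by
    rw [(Polynomial.splits_iff_card_roots).mp hsp, Matrix.charpoly_natDegree_eq_dim,
      Fintype.card_fin]
  have htr' : A.trace = A.charpoly.roots.sum := Matrix.trace_eq_sum_roots_charpoly A
  -- all roots are 1
  have key : ∀ μ ∈ A.charpoly.roots, μ = 1 := by
    intro μ hμ
    by_contra hne
    have hre : ∀ ν ∈ A.charpoly.roots, ν.re ≤ 1 := by
      intro ν hν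
      calc ν.re ≤ ‖ν‖ := Complex.re_le_norm ν
      _ = 1 := my_abs_one hm (my_root_pow A hA hν)
    have habs : ‖μ‖ = 1 := my_abs_one hm (my_root_pow A hA hμ)
    have hμlt : μ.re < 1 := by
      rcases lt_or_eq_of_le (hre μ hμ) with h | h
      · exact h
      · exfalso
        apply hne
        have him : μ.im = 0 := by
          have := Complex.sq_norm μ
          rw [habs, Complex.normSq_apply] at this
          nlinarith
        exact Complex.ext h him
    have hlt : (A.charpoly.roots.map Complex.re).sum
        < (A.charpoly.roots.map (fun _ => (1 : ℝ))).sum :=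
      Multiset.sum_lt_sum hre ⟨μ, hμ, hμlt⟩
    have hsum : (A.charpoly.roots.map Complex.re).sum = n := by
      have : (A.charpoly.roots.map Complex.re).sum = (A.charpoly.roots.sum).re := by
        exact (map_multiset_sum Complex.reAddGroupHom A.charpoly.roots).symm
      rw [this, ← htr', htr]
      simp
    rw [hsum, Multiset.map_const', Multiset.sum_replicate, hcard] at hlt
    simp at hlt
  have hrep : A.charpoly.roots = Multiset.replicate n 1 :=
    Multiset.eq_replicate.mpr ⟨hcard, key⟩
  have hcp : A.charpoly = (X - 1) ^ n := by
    have := hsp.eq_prod_roots_of_monic (Matrix.charpoly_monic A)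
    rw [hrep] at this
    simpa [Multiset.map_replicate, Multiset.prod_replicate] using this
  have hnil : (A - 1) ^ n = 0 := by
    have := Matrix.aeval_self_charpoly A
    rw [hcp] at this
    simpa [map_pow, map_sub] using this
  -- gcd trick
  set p : ℂ[X] := (X - 1) ^ n with hp
  set q : ℂ[X] := X ^ m - 1 with hq
  have haevalp : Polynomial.aeval A p = 0 := by simpa [hp, map_pow, map_sub] using hnil
  have haevalq : Polynomial.aeval A q = 0 := by simp [hq, map_pow, map_sub, hA]
  set d : ℂ[X] := EuclideanDomain.gcd p q with hd
  have hd0 : Polynomial.aeval A d = 0 := by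
    rw [hd, EuclideanDomain.gcd_eq_gcd_ab p q]
    simp [map_add, map_mul, haevalp, haevalq]
  have hsqf : Squarefree q := by
    have : (q : ℂ[X]).Separable := by
      have := Polynomial.separable_X_pow_sub_C (1 : ℂ) (by
        exact_mod_cast Nat.cast_ne_zero.mpr hm.ne') one_ne_zero
      simpa [hq] using this
    exact this.squarefree
  have hdsq : Squarefree d := Squarefree.squarefree_of_dvd (EuclideanDomain.gcd_dvd_right p q) hsqf
  have hdX : d ∣ (X - 1 : ℂ[X]) := by
    have hdp : d ∣ p := EuclideanDomain.gcd_dvd_left p q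
    exact (hdsq.dvd_pow_iff_dvd hn.ne').mp (hp ▸ hdp)
  obtain ⟨c, hc⟩ := hdX
  have : Polynomial.aeval A (X - 1 : ℂ[X]) = 0 := by
    rw [hc, map_mul, hd0, zero_mul]
  have hA1 : A - 1 = 0 := by simpa [map_sub] using this
  linear_combination (norm := abel) hA1

lemma my_trace_mem {n m : ℕ} (hm : 0 < m) (A : Matrix (Fin n) (Fin n) ℂ) (hA : A ^ m = 1) :
    A.trace ∈ (fun f : Fin n → ℂ => ∑ i, f i) ''
      (Set.pi Set.univ fun _ : Fin n => {z : ℂ | z ^ m = 1}) := by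
  have hsp : A.charpoly.Splits := IsAlgClosed.splits _
  have hcard : A.charpoly.roots.card = n := by
    rw [(Polynomial.splits_iff_card_roots).mp hsp, Matrix.charpoly_natDegree_eq_dim,
      Fintype.card_fin]
  have htr' : A.trace = A.charpoly.roots.sum := Matrix.trace_eq_sum_roots_charpoly A
  set l := A.charpoly.roots.toList with hl
  have hlen : l.length = n := by rw [hl, Multiset.length_toList, hcard]
  refine ⟨fun i => l.get (Fin.cast hlen.symm i), ?_, ?_⟩
  · intro i _
    have hmem : l.get (Fin.cast hlen.symm i) ∈ A.charpoly.roots := by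
      rw [← Multiset.mem_toList]
      exact l.get_mem _
    exact my_root_pow A hA hmem
  · have h1 : ∑ i : Fin n, l.get (Fin.cast hlen.symm i) = ∑ j : Fin l.length, l.get j :=
      Fintype.sum_equiv (finCongr hlen.symm) _ _ (fun i => rfl)
    show (∑ i : Fin n, l.get (Fin.cast hlen.symm i)) = A.trace
    rw [h1, ← List.sum_ofFn, List.ofFn_get, Multiset.sum_toList, ← htr']

theorem subgroup_GL_complex_bounded_exponent_finite (n : ℕ) (hn : 0 < n)
    (G : Subgroup (GL (Fin n) ℂ))
    (h : ∃ m : ℕ, 0 < m ∧ ∀ g ∈ G, g ^ m = 1) :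
    Finite G := by
  obtain ⟨m, hm, hpow⟩ := h
  -- matrix version of the exponent hypothesis
  have hpow' : ∀ g : G, ((g : GL (Fin n) ℂ) : Matrix (Fin n) (Fin n) ℂ) ^ m = 1 := by
    intro g
    have := hpow g g.2
    rw [← Units.val_pow_eq_pow_val, this, Units.val_one]
  set s : Set (Matrix (Fin n) (Fin n) ℂ) :=
    (fun g : G => ((g : GL (Fin n) ℂ) : Matrix (Fin n) (Fin n) ℂ)) '' Set.univ with hs
  obtain ⟨t, hts, hspan, hli⟩ := exists_linearIndependent ℂ s
  have htfin : t.Finite := hli.setFinite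
  set T : Set ℂ := (fun f : Fin n → ℂ => ∑ i, f i) ''
    (Set.pi Set.univ fun _ : Fin n => {z : ℂ | z ^ m = 1}) with hT
  have hTfin : T.Finite := by
    apply Set.Finite.image
    apply Set.Finite.pi
    intro _
    have hne : (X ^ m - 1 : ℂ[X]) ≠ 0 := by
      intro hcon
      have := congrArg (Polynomial.eval 0) hcon
      simp [Polynomial.eval_pow, zero_pow hm.ne'] at this
    apply (Polynomial.finite_setOf_isRoot hne).subset
    intro z hz
    simp only [Set.mem_setOf_eq] at hz ⊢
    simp [Polynomial.IsRoot, hz]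
  -- the injection
  have main : ∀ g : G, ∀ x : t, (((g : GL (Fin n) ℂ) : Matrix (Fin n) (Fin n) ℂ) * (x : Matrix (Fin n) (Fin n) ℂ)).trace ∈ T := by
    intro g x
    obtain ⟨g', -, hg'⟩ := hts x.2
    have hmem : ((g : GL (Fin n) ℂ) : Matrix (Fin n) (Fin n) ℂ) * (x : Matrix (Fin n) (Fin n) ℂ)
        = (((g * g' : G) : GL (Fin n) ℂ) : Matrix (Fin n) (Fin n) ℂ) := by
      rw [← hg', Subgroup.coe_mul, Units.val_mul]
    rw [hmem]
    exact my_trace_mem hm _ (hpow' _)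
  haveI : Finite t := htfin.to_subtype
  haveI : Finite T := hTfin.to_subtype
  set Φ : G → (t → T) := fun g x => ⟨_, main g x⟩ with hΦ
  apply Finite.of_injective Φ
  intro g₁ g₂ heq
  -- trace equality on t
  have htr : ∀ x ∈ t, (((g₁ : GL (Fin n) ℂ) : Matrix (Fin n) (Fin n) ℂ) * x).trace
      = (((g₂ : GL (Fin n) ℂ) : Matrix (Fin n) (Fin n) ℂ) * x).trace := by
    intro x hx
    have := congrFun heq ⟨x, hx⟩
    simpa [hΦ, Subtype.ext_iff] using this
  set B₁ : Matrix (Fin n) (Fin n) ℂ := ((g₁ : GL (Fin n) ℂ) : Matrix (Fin n) (Fin n) ℂ)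
  set B₂ : Matrix (Fin n) (Fin n) ℂ := ((g₂ : GL (Fin n) ℂ) : Matrix (Fin n) (Fin n) ℂ)
  set L : Matrix (Fin n) (Fin n) ℂ →ₗ[ℂ] ℂ :=
    (Matrix.traceLinearMap (Fin n) ℂ ℂ).comp (LinearMap.mulLeft ℂ (B₁ - B₂)) with hL
  have hker : ∀ y ∈ s, L y = 0 := by
    have htker : t ⊆ (LinearMap.ker L : Set (Matrix (Fin n) (Fin n) ℂ)) := by
      intro x hx
      simp only [SetLike.mem_coe, LinearMap.mem_ker, hL, LinearMap.comp_apply,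
        LinearMap.mulLeft_apply, Matrix.traceLinearMap_apply]
      rw [sub_mul, Matrix.trace_sub, htr x hx, sub_self]
    have : Submodule.span ℂ s ≤ LinearMap.ker L := by
      rw [← hspan]
      exact Submodule.span_le.mpr htker
    intro y hy
    exact this (Submodule.subset_span hy)
  -- apply with y = g₂⁻¹
  have hy : ((g₂⁻¹ : G) : GL (Fin n) ℂ).val ∈ s := ⟨g₂⁻¹, Set.mem_univ _, rfl⟩
  have h0 := hker _ hy
  simp only [hL, LinearMap.comp_apply, LinearMap.mulLeft_apply,
    Matrix.traceLinearMap_apply] at h0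
  rw [sub_mul, Matrix.trace_sub, sub_eq_zero] at h0
  have hB2 : B₂ * ((g₂⁻¹ : G) : GL (Fin n) ℂ).val = 1 := by
    have h2 : ((g₂ : GL (Fin n) ℂ)) * ((g₂⁻¹ : G) : GL (Fin n) ℂ) = 1 := by
      rw [← Subgroup.coe_mul, mul_inv_cancel, OneMemClass.coe_one]
    calc B₂ * ((g₂⁻¹ : G) : GL (Fin n) ℂ).val
        = (((g₂ : GL (Fin n) ℂ)) * ((g₂⁻¹ : G) : GL (Fin n) ℂ)).val := (Units.val_mul _ _).symm
      _ = 1 := by rw [h2, Units.val_one]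
  rw [hB2, Matrix.trace_one] at h0
  have hB1 : B₁ * ((g₂⁻¹ : G) : GL (Fin n) ℂ).val
      = ((g₁ * g₂⁻¹ : G) : GL (Fin n) ℂ).val := by
    rw [Subgroup.coe_mul, Units.val_mul]
  rw [hB1] at h0
  have hone : ((g₁ * g₂⁻¹ : G) : GL (Fin n) ℂ).val = 1 := by
    apply my_key hn hm _ (hpow' _)
    rw [h0]
    simp [Fintype.card_fin]
  have : (g₁ * g₂⁻¹ : G) = 1 := by
    apply Subtype.ext
    exact Units.ext hone
  calc g₁ = g₁ * g₂⁻¹ * g₂ := by group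
    _ = g₂ := by rw [this, one_mul]
end
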